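/- Let n, m, q, r ∈ ℕ with r ≥ 1, let A ∈ ℝ^{n×n}, B ∈ ℝ^{n×m}, C ∈ ℝ^{m×n} satisfy C A^k B = 0 for all k = 0, …, r−2, and let Ã ∈ ℝ^{q×q}, B̃ ∈ ℝ^{q×m}, C̃ ∈ ℝ^{m×q} be arbitrary. Define the series interconnection A_ic = [[A, B C̃],[0, Ã]] ∈ ℝ^{(n+q)×(n+q)}, B_ic = [B; B̃] ∈ ℝ^{(n+q)×m}, C_ic = [C, 0] ∈ ℝ^{m×(n+q)}. Then C_ic A_ic^k B_ic = C A^k B for all k = 0, …, r−1; in particular C_ic A_ic^k B_ic = 0 for k = 0, …, r−2 and C_ic A_ic^{r−1} B_ic = C A^{r−1} B. -/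

import Mathlib

open Matrix

/-- **Markov parameters of the series interconnection.**
If `(A,B,C)` has vanishing Markov parameters `C A^k B = 0` for `k = 0,…,r−2`, then the series
interconnection with an arbitrary internal model `(Ã,B̃,C̃)` has the same Markov parameters as
the original system up to order `r−1`. -/
theorem stmt_0 (n m q r : ℕ) (hr : 1 ≤ r)
    (A : Matrix (Fin n) (Fin n) ℝ) (B : Matrix (Fin n) (Fin m) ℝ) (C : Matrix (Fin m) (Fin n) ℝ)
    (Atil : Matrix (Fin q) (Fin q) ℝ) (Btil : Matrix (Fin q) (Fin m) ℝ)
    (Ctil : Matrix (Fin m) (Fin q) ℝ)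
    (hMarkov : ∀ k, k < r - 1 → C * A ^ k * B = 0)
    (Aic : Matrix (Fin n ⊕ Fin q) (Fin n ⊕ Fin q) ℝ)
    (Bic : Matrix (Fin n ⊕ Fin q) (Fin m) ℝ)
    (Cic : Matrix (Fin m) (Fin n ⊕ Fin q) ℝ)
    (hAic : Aic = Matrix.fromBlocks A (B * Ctil) 0 Atil)
    (hBic : Bic = Matrix.fromRows B Btil)
    (hCic : Cic = Matrix.fromCols C 0) :
    (∀ k, k < r → Cic * Aic ^ k * Bic = C * A ^ k * B) ∧
    (∀ k, k < r - 1 → Cic * Aic ^ k * Bic = 0) ∧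
    Cic * Aic ^ (r - 1) * Bic = C * A ^ (r - 1) * B := by
  have key : ∀ k, k < r → Cic * Aic ^ k = fromCols (C * A ^ k) 0 := by
    intro k
    induction k with
    | zero => intro _; simp [hCic]
    | succ k ih =>
      intro hk
      have hk' : k < r := Nat.lt_of_succ_lt hk
      have hkr : k < r - 1 := by omega
      have hCAB : C * A ^ k * B = 0 := hMarkov k hkr
      rw [pow_succ, ← Matrix.mul_assoc, ih hk', hAic, fromCols_mul_fromBlocks]
      rw [← Matrix.mul_assoc, hCAB]
      simp [pow_succ, Matrix.mul_assoc]
  have main : ∀ k, k < r → Cic * Aic ^ k * Bic = C * A ^ k * B := by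
    intro k hk
    rw [key k hk, hBic, fromCols_mul_fromRows]
    simp
  refine ⟨main, fun k hk => ?_, main (r - 1) (by omega)⟩
  rw [main k (by omega), hMarkov k hk]
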